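/- Let r be an even positive integer with r/2 odd, and let G be a finite connected r-regular simple graph. Then G has an (r/2)-factor if and only if the number of vertices of G is even. -/

import Mathlib

/-- A graph is `r`-regular if every vertex has degree `r`. -/
def IsRegular' {V : Type*} [Fintype V] (G : SimpleGraph V) (r : ℕ) : Prop :=
  ∀ v : V, (G.neighborSet v).ncard = r

/-- A `k`-factor of `G` is a spanning subgraph `F ≤ G` in which every vertex
has degree exactly `k`. -/
def HasKFactor {V : Type*} [Fintype V] (G : SimpleGraph V) (k : ℕ) : Prop :=
  ∃ F : SimpleGraph V, F ≤ G ∧ ∀ v : V, (F.neighborSet v).ncard = k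

namespace EulerHelper

open SimpleGraph List

/-- Take every other element of a list, starting with the first iff the flag is `true`. -/
def alter {α : Type*} : Bool → List α → List α
  | _, [] => []
  | true, a :: l => a :: alter false l
  | false, _ :: l => alter true l

@[simp] lemma alter_nil {α : Type*} (b : Bool) : alter b ([] : List α) = [] := by
  cases b <;> rfl

@[simp] lemma alter_true_cons {α : Type*} (a : α) (l : List α) :
    alter true (a :: l) = a :: alter false l := rfl

@[simp] lemma alter_false_cons {α : Type*} (a : α) (l : List α) :
    alter false (a :: l) = alter true l := rfl

lemma alter_sublist {α : Type*} : ∀ (b : Bool) (l : List α), alter b l <+ l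
  | b, [] => by simp
  | true, a :: l => (alter_sublist false l).cons₂ a
  | false, a :: l => (alter_sublist true l).cons a

lemma countP_alter {α : Type*} (q : α → Bool) :
    ∀ l : List α, (alter true l).countP q + (alter false l).countP q = l.countP q
  | [] => rfl
  | a :: l => by
    simp only [alter_true_cons, alter_false_cons, List.countP_cons]
    have := countP_alter q l
    omega

variable {V : Type*} {G : SimpleGraph V}

/-- The key alternating-count invariant along a walk. -/
lemma walk_invariant [DecidableEq V] {u v : V} (p : G.Walk u v) (x : V) :
    ((alter true p.edges).countP (fun e => x ∈ e) : ℤ)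
      - (alter false p.edges).countP (fun e => x ∈ e)
    = (if u = x then 1 else 0) + (-1) ^ (p.length + 1) * (if v = x then 1 else 0) := by
  induction p with
  | nil =>
    simp only [SimpleGraph.Walk.edges_nil, alter_nil, List.countP_nil, Nat.cast_zero,
      SimpleGraph.Walk.length_nil, zero_add, pow_one, sub_self]
    split_ifs <;> ring
  | @cons a b c h p ih =>
    have hab : a ≠ b := h.ne
    have hmem : (if (fun e => decide (x ∈ e)) s(a, b) = true then (1 : ℤ) else 0)
        = (if a = x then 1 else 0) + (if b = x then 1 else 0) := by
      by_cases h1 : a = x <;> by_cases h2 : b = x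
      · exact absurd (h1.trans h2.symm) hab
      · have hx : x ∈ s(a, b) := by rw [Sym2.mem_iff]; exact Or.inl h1.symm
        simp [hx, h1, h2]
      · have hx : x ∈ s(a, b) := by rw [Sym2.mem_iff]; exact Or.inr h2.symm
        simp [hx, h1, h2]
      · have hx : ¬ x ∈ s(a, b) := by
          rw [Sym2.mem_iff]
          push_neg
          exact ⟨fun hh => h1 hh.symm, fun hh => h2 hh.symm⟩
        simp [hx, h1, h2]
    rw [SimpleGraph.Walk.edges_cons, alter_true_cons, alter_false_cons,
      List.countP_cons, SimpleGraph.Walk.length_cons]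
    have hpow : (-1 : ℤ) ^ (p.length + 1 + 1) = -((-1 : ℤ) ^ (p.length + 1)) := by ring
    rw [hpow]
    push_cast
    linarith [ih, hmem]

lemma trail_length_le [Fintype V] [DecidableEq V] [DecidableRel G.Adj]
    {u v : V} {p : G.Walk u v} (hp : p.IsTrail) : p.length ≤ G.edgeFinset.card := by
  have h1 : p.edges.toFinset.card = p.edges.length := List.toFinset_card_of_nodup hp.edges_nodup
  have h2 : p.edges.toFinset ⊆ G.edgeFinset := by
    intro e he
    rw [List.mem_toFinset] at he
    rw [SimpleGraph.mem_edgeFinset]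
    exact p.edges_subset_edgeSet he
  have := Finset.card_le_card h2
  rw [h1, p.length_edges] at this
  exact this

lemma crossing {S : Set V} : ∀ {x u : V} (_ : G.Walk x u), x ∉ S → u ∈ S →
    ∃ a b, G.Adj a b ∧ a ∉ S ∧ b ∈ S := by
  intro x u w
  induction w with
  | nil => intro hx hu; exact absurd hu hx
  | @cons a b c h w ih =>
    intro hx hu
    by_cases hb : b ∈ S
    · exact ⟨a, b, h, hx, hb⟩
    · exact ih hb hu

/-- Existence of an Eulerian closed trail in a connected graph with all degrees even. -/
lemma exists_euler [Fintype V] [DecidableEq V] [DecidableRel G.Adj]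
    (hconn : G.Connected) (heven : ∀ v : V, Even (G.degree v)) :
    ∃ (u : V) (p : G.Walk u u), p.IsTrail ∧ ∀ e ∈ G.edgeSet, e ∈ p.edges := by
  classical
  obtain ⟨v0⟩ := hconn.nonempty
  set bound := G.edgeFinset.card with hbound
  set P : ℕ → Prop := fun n => ∃ (u v : V) (p : G.Walk u v), p.IsTrail ∧ p.length = n with hP
  have hP0 : P 0 := ⟨v0, v0, SimpleGraph.Walk.nil, SimpleGraph.Walk.IsTrail.nil, rfl⟩
  set k := Nat.findGreatest P bound with hk
  have hkspec : P k := Nat.findGreatest_spec (Nat.zero_le _) hP0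
  have hmax : ∀ {w z : V} (q : G.Walk w z), q.IsTrail → q.length ≤ k := by
    intro w z q hq
    exact Nat.le_findGreatest (trail_length_le hq) ⟨w, z, q, hq, rfl⟩
  obtain ⟨u, v, p, hp, hplen⟩ := hkspec
  -- Step A : a maximal trail is closed
  have huv : u = v := by
    by_contra hne
    have hodd : ¬ Even (p.edges.countP fun e => v ∈ e) := by
      rw [hp.even_countP_edges_iff v]
      exact fun hcontra => (hcontra hne).2 rfl
    have hcount : p.edges.countP (fun e => v ∈ e)
        = (p.edges.toFinset.filter (fun e => v ∈ e)).card := by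
      rw [List.countP_eq_length_filter, ← List.toFinset_card_of_nodup
        (hp.edges_nodup.filter _), List.toFinset_filter]
      simp only [decide_eq_true_eq]
    have hsub : p.edges.toFinset.filter (fun e => v ∈ e) ⊆ G.incidenceFinset v := by
      intro e he
      rw [Finset.mem_filter, List.mem_toFinset] at he
      rw [SimpleGraph.mem_incidenceFinset]
      exact ⟨p.edges_subset_edgeSet he.1, he.2⟩
    have hnee : p.edges.toFinset.filter (fun e => v ∈ e) ≠ G.incidenceFinset v := by
      intro hEq
      apply hodd
      rw [hcount, hEq, SimpleGraph.card_incidenceFinset_eq_degree]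
      exact heven v
    obtain ⟨e, heI, heP⟩ := Finset.exists_of_ssubset (hsub.ssubset_of_ne hnee)
    rw [SimpleGraph.mem_incidenceFinset] at heI
    obtain ⟨heE, hve⟩ := heI
    set w := Sym2.Mem.other hve with hw
    have hspec : s(v, w) = e := Sym2.other_spec hve
    have hadj : G.Adj v w := by
      rw [← SimpleGraph.mem_edgeSet, hspec]
      exact heE
    have hnotin : s(v, w) ∉ p.edges := by
      intro hmem
      apply heP
      rw [Finset.mem_filter, List.mem_toFinset]
      exact ⟨hspec ▸ hmem, hve⟩
    have hq : (p.concat hadj).IsTrail := by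
      rw [SimpleGraph.Walk.isTrail_def, SimpleGraph.Walk.edges_concat,
        List.concat_eq_append, List.nodup_append]
      exact ⟨hp.edges_nodup, List.nodup_singleton _,
        by simpa using fun a ha (hEq : a = s(v, w)) => hnotin (hEq ▸ ha)⟩
    have hlen := hmax _ hq
    rw [SimpleGraph.Walk.length_concat, hplen] at hlen
    omega
  subst huv
  -- Step B : a maximal closed trail covers all edges
  refine ⟨u, p, hp, ?_⟩
  by_contra hcov
  push_neg at hcov
  obtain ⟨e, heG, heP⟩ := hcov
  revert heG heP
  induction e using Sym2.ind with
  | _ x y =>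
  intro heG heP
  have hxy : G.Adj x y := heG
  have key : ∃ a b, G.Adj a b ∧ b ∈ p.support ∧ s(a, b) ∉ p.edges := by
    by_cases hx : x ∈ p.support
    · exact ⟨y, x, hxy.symm, hx, by rwa [Sym2.eq_swap]⟩
    · obtain ⟨a, b, hab, ha, hb⟩ :=
        crossing (S := {z | z ∈ p.support}) ((hconn x u).some) hx p.start_mem_support
      refine ⟨a, b, hab, hb, fun hmem => ha ?_⟩
      exact p.fst_mem_support_of_mem_edges hmem
  obtain ⟨a, b, hab, hb, hnotin⟩ := key
  have hrt : (p.rotate b hb).IsTrail := hp.rotate hb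
  have hq : (SimpleGraph.Walk.cons hab (p.rotate b hb)).IsTrail := by
    rw [SimpleGraph.Walk.isTrail_cons]
    refine ⟨hrt, fun hmem => hnotin ?_⟩
    exact (p.rotate_edges b hb).mem_iff.mp hmem
  have hle := hmax _ hq
  have h1 : (p.rotate b hb).edges.length = p.edges.length :=
    (p.rotate_edges b hb).perm.length_eq
  rw [SimpleGraph.Walk.length_cons] at hle
  simp only [← SimpleGraph.Walk.length_edges] at hle hplen
  omega

lemma ncard_neighborSet_eq_degree (H : SimpleGraph V) [Fintype V] [DecidableRel H.Adj] (v : V) :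
    (H.neighborSet v).ncard = H.degree v :=
  Set.ncard_eq_toFinset_card' _

lemma ncard_neighborSet_eq_countP [Fintype V] [DecidableEq V] {L : List (Sym2 V)}
    (hnd : L.Nodup) (hL : ∀ e ∈ L, e ∈ G.edgeSet) (v : V) :
    ((SimpleGraph.fromEdgeSet {e | e ∈ L}).neighborSet v).ncard
      = L.countP (fun e => v ∈ e) := by
  classical
  set s : Finset V := Finset.univ.filter (fun w => s(v, w) ∈ L) with hs
  have hset : (SimpleGraph.fromEdgeSet {e | e ∈ L}).neighborSet v = ↑s := by
    ext w
    simp only [SimpleGraph.mem_neighborSet, SimpleGraph.fromEdgeSet_adj, Set.mem_setOf_eq,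
      Finset.coe_filter, Finset.mem_univ, true_and, hs, Set.mem_setOf_eq]
    constructor
    · exact fun h => h.1
    · intro h
      refine ⟨h, fun hvw => ?_⟩
      subst hvw
      exact G.loopless.irrefl v (hL _ h)
  rw [hset, Set.ncard_coe_finset]
  rw [List.countP_eq_length_filter, ← List.toFinset_card_of_nodup (hnd.filter _)]
  apply Finset.card_bij (i := fun w _ => s(v, w))
  · intro w hw
    rw [Finset.mem_filter] at hw
    rw [List.mem_toFinset, List.mem_filter]
    exact ⟨hw.2, by simp⟩
  · intro w1 h1 w2 h2 hEq
    exact Sym2.congr_right.mp hEq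
  · intro e he
    rw [List.mem_toFinset, List.mem_filter] at he
    obtain ⟨heL, hve⟩ := he
    have hve' : v ∈ e := by simpa using hve
    refine ⟨Sym2.Mem.other hve', ?_, Sym2.other_spec hve'⟩
    rw [Finset.mem_filter]
    refine ⟨Finset.mem_univ _, ?_⟩
    rw [Sym2.other_spec hve']
    exact heL

end EulerHelper

/-- Let `r` be an even positive integer with `r/2` odd, and let `G` be a finite
connected `r`-regular simple graph. Then `G` has an `(r/2)`-factor if and only if
the number of vertices of `G` is even. -/
theorem stmt_1 (r : ℕ) (hr : 0 < r) (hre : Even r) (hro : Odd (r / 2))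
    {V : Type*} [Fintype V] (G : SimpleGraph V)
    (hconn : G.Connected) (hreg : IsRegular' G r) :
    HasKFactor G (r / 2) ↔ Even (Fintype.card V) := by
  classical
  open EulerHelper List in
  have h2r : 2 * (r / 2) = r := Nat.two_mul_div_two_of_even hre
  have hdeg : ∀ v : V, G.degree v = r := fun v => by
    rw [← EulerHelper.ncard_neighborSet_eq_degree G v]; exact hreg v
  constructor
  · -- factor → even card
    rintro ⟨F, hFG, hFreg⟩
    have hFdeg : ∀ v : V, F.degree v = r / 2 := fun v => by
      rw [← EulerHelper.ncard_neighborSet_eq_degree F v]; exact hFreg v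
    have hsum := F.sum_degrees_eq_twice_card_edges
    simp only [hFdeg, Finset.sum_const, smul_eq_mul, Finset.card_univ] at hsum
    have heven : Even (Fintype.card V * (r / 2)) := ⟨F.edgeFinset.card, by omega⟩
    rcases Nat.even_mul.mp heven with h | h
    · exact h
    · exact absurd h (Nat.not_even_iff_odd.mpr hro)
  · -- even card → factor
    intro hcard
    have heven : ∀ v : V, Even (G.degree v) := fun v => by rw [hdeg v]; exact hre
    obtain ⟨u, p, hp, hcov⟩ := EulerHelper.exists_euler hconn heven
    have hedges_finset : p.edges.toFinset = G.edgeFinset := by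
      ext e
      simp only [List.mem_toFinset, SimpleGraph.mem_edgeFinset]
      exact ⟨fun h => p.edges_subset_edgeSet h, fun h => hcov e h⟩
    have hlenE : p.edges.length = G.edgeFinset.card := by
      rw [← List.toFinset_card_of_nodup hp.edges_nodup, hedges_finset]
    have hsum := G.sum_degrees_eq_twice_card_edges
    simp only [hdeg, Finset.sum_const, smul_eq_mul, Finset.card_univ] at hsum
    have hEcard : G.edgeFinset.card = Fintype.card V * (r / 2) := by
      have hx : Fintype.card V * r = 2 * (Fintype.card V * (r / 2)) := by
        conv_lhs => rw [← h2r]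
        ring
      omega
    have hevenlen : Even p.length := by
      rw [← p.length_edges, hlenE, hEcard]
      exact hcard.mul_right _
    have hcount : ∀ x : V, p.edges.countP (fun e => x ∈ e) = r := by
      intro x
      rw [List.countP_eq_length_filter, ← List.toFinset_card_of_nodup (hp.edges_nodup.filter _),
        List.toFinset_filter]
      simp only [decide_eq_true_eq]
      rw [hedges_finset, ← SimpleGraph.incidenceFinset_eq_filter,
        SimpleGraph.card_incidenceFinset_eq_degree]
      exact hdeg x
    set L := EulerHelper.alter true p.edges with hL
    have hLsub : ∀ e ∈ L, e ∈ p.edges := fun e he =>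
      (EulerHelper.alter_sublist true p.edges).subset he
    have hLG : ∀ e ∈ L, e ∈ G.edgeSet := fun e he => p.edges_subset_edgeSet (hLsub e he)
    have hLnd : L.Nodup := (EulerHelper.alter_sublist true p.edges).nodup hp.edges_nodup
    have hLcount : ∀ x : V, L.countP (fun e => x ∈ e) = r / 2 := by
      intro x
      have hinv := EulerHelper.walk_invariant p x
      have hodd1 : Odd (p.length + 1) := Even.add_one hevenlen
      rw [hodd1.neg_one_pow] at hinv
      have h0 : ((EulerHelper.alter true p.edges).countP (fun e => x ∈ e) : ℤ)
          = (EulerHelper.alter false p.edges).countP (fun e => x ∈ e) := by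
        rcases eq_or_ne u x with h | h <;> simp [h] at hinv <;> linarith [hinv]
      have h0' : (EulerHelper.alter true p.edges).countP (fun e => x ∈ e)
          = (EulerHelper.alter false p.edges).countP (fun e => x ∈ e) := by exact_mod_cast h0
      have htot := EulerHelper.countP_alter (fun e => decide (x ∈ e)) p.edges
      rw [hcount x] at htot
      rw [← hL] at h0' htot
      omega
    refine ⟨SimpleGraph.fromEdgeSet {e | e ∈ L}, ?_, ?_⟩
    · calc SimpleGraph.fromEdgeSet {e | e ∈ L}
          ≤ SimpleGraph.fromEdgeSet G.edgeSet := SimpleGraph.fromEdgeSet_mono hLG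
        _ = G := SimpleGraph.fromEdgeSet_edgeSet G
    · intro v
      rw [EulerHelper.ncard_neighborSet_eq_countP hLnd hLG v]
      exact hLcount v
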